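/- Let N ≥ 2 be an integer and q ≥ 1. For a real sequence a = (a_k)_{k≥0}, set ‖a‖_1 = Σ_{k=0}^∞ |a_k|, ‖a‖_N = (Σ_{k=0}^∞ |a_k|^N)^{1/N}, and ‖a‖_e = (Σ_{k=0}^∞ |a_k|^q e^k)^{1/q}, and for h > 0 define μ(h) = inf{‖a‖_e : ‖a‖_1 = h, ‖a‖_N ≤ 1}. Then there exist constants c, C > 0 (depending only on N and q) such that for every h > 1: c · exp(h^{N/(N−1)}/q) / h^{1/(N−1)} ≤ μ(h) ≤ C · exp(h^{N/(N−1)}/q) / h^{1/(N−1)}. -/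

import Mathlib

open MeasureTheory Real Filter
open scoped ENNReal

noncomputable section

/-- Euclidean space `ℝ^N`. -/
abbrev Euc (N : ℕ) := EuclideanSpace ℝ (Fin N)

/-- Smooth compactly supported test functions (`C_0^∞`). -/
def TestFun (N : ℕ) (u : Euc N → ℝ) : Prop :=
  ContDiff ℝ (⊤ : ℕ∞) u ∧ HasCompactSupport u

/-- The hypotheses on the anisotropic (Finsler) norm `F`: nonnegative, convex,
`C²` away from the origin, even, positively 1-homogeneous, positive away from `0`,
with positive definite Hessian of `F²` away from `0`. -/
structure IsFinsler (N : ℕ) (F : Euc N → ℝ) : Prop where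
  nonneg : ∀ x, 0 ≤ F x
  convexOn : ConvexOn ℝ Set.univ F
  smooth : ContDiffOn ℝ 2 F {(0 : Euc N)}ᶜ
  even : ∀ x, F (-x) = F x
  homog : ∀ (t : ℝ) (x : Euc N), F (t • x) = |t| * F x
  pos : ∀ x : Euc N, x ≠ 0 → 0 < F x
  hess_posdef : ∀ x : Euc N, x ≠ 0 → ∀ v : Euc N, v ≠ 0 →
    0 < iteratedFDeriv ℝ 2 (fun y => (F y) ^ 2) x ![v, v]

/-- The polar (dual) norm `F⁰(x) = sup_{ξ ≠ 0} ⟨x, ξ⟩ / F(ξ)`. -/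
def polar (N : ℕ) (F : Euc N → ℝ) (x : Euc N) : ℝ :=
  sSup {y : ℝ | ∃ ξ : Euc N, ξ ≠ 0 ∧ y = (inner ℝ x ξ : ℝ) / F ξ}

/-- `κ_N`: the Lebesgue measure of the unit Wulff ball `{F⁰ ≤ 1}`. -/
def kappa (N : ℕ) (F : Euc N → ℝ) : ℝ :=
  (volume {x : Euc N | polar N F x ≤ 1}).toReal

/-- `λ_N = N^{N/(N-1)} κ_N^{1/(N-1)}`. -/
def lamN (N : ℕ) (F : Euc N → ℝ) : ℝ :=
  (N : ℝ) ^ ((N : ℝ) / ((N : ℝ) - 1)) * kappa N F ^ (1 / ((N : ℝ) - 1))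

/-- `ω_N`: the Lebesgue measure of the Euclidean unit ball. -/
def omegaN (N : ℕ) : ℝ := (volume (Metric.ball (0 : Euc N) 1)).toReal

/-- `α_N = N^{N/(N-1)} ω_N^{1/(N-1)}`. -/
def alphaN (N : ℕ) : ℝ :=
  (N : ℝ) ^ ((N : ℝ) / ((N : ℝ) - 1)) * omegaN N ^ (1 / ((N : ℝ) - 1))

/-- The anisotropic Dirichlet norm `‖F(∇u)‖_N = (∫ F(∇u)^N)^{1/N}`. -/
def gradNormF (N : ℕ) (F : Euc N → ℝ) (u : Euc N → ℝ) : ℝ :=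
  (∫ x : Euc N, F (gradient u x) ^ N) ^ (1 / (N : ℝ))

/-- The Euclidean Dirichlet norm `‖∇u‖_N = (∫ |∇u|^N)^{1/N}`. -/
def gradNormE (N : ℕ) (u : Euc N → ℝ) : ℝ :=
  (∫ x : Euc N, ‖gradient u x‖ ^ N) ^ (1 / (N : ℝ))

/-- The `L^q` norm `‖u‖_q = (∫ |u|^q)^{1/q}`. -/
def lqNorm (N : ℕ) (q : ℝ) (u : Euc N → ℝ) : ℝ :=
  (∫ x : Euc N, |u x| ^ q) ^ (1 / q)

/-- Membership in `D^{N,q}(ℝ^N)`, the completion of `C_0^∞(ℝ^N)` under the norm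
`‖∇u‖_N + ‖u‖_q`. -/
def MemD (N : ℕ) (q : ℝ) (u : Euc N → ℝ) : Prop :=
  ∃ φ : ℕ → Euc N → ℝ, (∀ n, TestFun N (φ n)) ∧
    Tendsto (fun n => gradNormE N (fun y => φ n y - u y)
      + lqNorm N q (fun y => φ n y - u y)) atTop (nhds 0)

/-- The truncated exponential series `Φ_{N,q,β}`. -/
def Phi (N : ℕ) (q β t : ℝ) : ℝ :=
  if 0 < β then
    ∑' j : ℕ, if q * ((N : ℝ) - 1) / (N : ℝ) * (1 - β / (N : ℝ)) < (j : ℝ)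
      then t ^ j / (Nat.factorial j : ℝ) else 0
  else
    ∑' j : ℕ, if q * ((N : ℝ) - 1) / (N : ℝ) ≤ (j : ℝ)
      then t ^ j / (Nat.factorial j : ℝ) else 0

/-- The decreasing rearrangement `u^♯(t) = sup {s ≥ 0 : |{u ≥ s}| > t}`. -/
def rearrangement (N : ℕ) (u : Euc N → ℝ) (t : ℝ) : ℝ :=
  sSup {s : ℝ | 0 ≤ s ∧ ENNReal.ofReal t < volume {x : Euc N | s ≤ u x}}

/-- The convex symmetrization `u⋆(x) = u^♯(κ_N F⁰(x)^N)`. -/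
def convexSymm (N : ℕ) (F : Euc N → ℝ) (u : Euc N → ℝ) (x : Euc N) : ℝ :=
  rearrangement N u (kappa N F * polar N F x ^ N)

/-- The Schwarz symmetrization `u*(x) = u^♯(ω_N |x|^N)`. -/
def schwarzSymm (N : ℕ) (u : Euc N → ℝ) (x : Euc N) : ℝ :=
  rearrangement N u (omegaN N * ‖x‖ ^ N)

/-- The subcritical anisotropic singular Trudinger–Moser supremum `ATMSC(N,q,λ,β)`. -/
def ATMSC (N : ℕ) (F : Euc N → ℝ) (q β lam : ℝ) : ℝ≥0∞ :=
  ⨆ u : {u : Euc N → ℝ // TestFun N u ∧ gradNormF N F u ≤ 1 ∧ lqNorm N q u ≠ 0},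
    (∫⁻ x : Euc N, ENNReal.ofReal
        (Phi N q β (lam * (1 - β / (N : ℝ)) * |u.1 x| ^ ((N : ℝ) / ((N : ℝ) - 1)))
          / polar N F x ^ β)) /
      ENNReal.ofReal (lqNorm N q u.1 ^ (q * (1 - β / (N : ℝ))))

/-- The critical anisotropic singular Trudinger–Moser supremum `ATMC_{a,b}(N,q,β)`
(with general growth constant `lam`). -/
def ATMC (N : ℕ) (F : Euc N → ℝ) (q β a b lam : ℝ) : ℝ≥0∞ :=
  ⨆ u : {u : Euc N → ℝ // TestFun N u ∧ gradNormF N F u ^ a + lqNorm N q u ^ b ≤ 1},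
    ∫⁻ x : Euc N, ENNReal.ofReal
      (Phi N q β (lam * (1 - β / (N : ℝ)) * |u.1 x| ^ ((N : ℝ) / ((N : ℝ) - 1)))
        / polar N F x ^ β)

/-- `μ(h)`: the infimum of `‖a‖_e` over sequences with `‖a‖_1 = h`, `‖a‖_N ≤ 1`. -/
def muSeq (N : ℕ) (q : ℝ) (h : ℝ) : ℝ≥0∞ :=
  ⨅ a : {a : ℕ → ℝ // Summable (fun k => |a k|) ∧ (∑' k : ℕ, |a k|) = h ∧
      Summable (fun k => |a k| ^ N) ∧ (∑' k : ℕ, |a k| ^ N) ≤ 1},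
    (∑' k : ℕ, ENNReal.ofReal (|a.1 k| ^ q * Real.exp (k : ℝ))) ^ (1 / q)

section AuxStatement19

lemma basic_facts (N : ℕ) (hN : 2 ≤ N) :
    (0:ℝ) < (N:ℝ) - 1 ∧ 1 ≤ (N:ℝ)/((N:ℝ)-1) ∧ (N:ℝ)/((N:ℝ)-1) ≤ 2 ∧
      ((N:ℝ)/((N:ℝ)-1)) * ((N:ℝ)-1) = N ∧
      (N:ℝ)/((N:ℝ)-1) - 1 = 1/((N:ℝ)-1) := by
  have h2 : (2:ℝ) ≤ (N:ℝ) := by exact_mod_cast hN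
  have h1 : (0:ℝ) < (N:ℝ) - 1 := by linarith
  refine ⟨h1, ?_, ?_, ?_, ?_⟩
  · rw [le_div_iff₀ h1]; linarith
  · rw [div_le_iff₀ h1]; linarith
  · field_simp
  · field_simp; ring

lemma muSeq_upper (N : ℕ) (hN : 2 ≤ N) (q : ℝ) (hq : 1 ≤ q) (h : ℝ) (hh : 1 < h) :
    muSeq N q h ≤ ENNReal.ofReal
      (Real.exp 1 * Real.exp (h ^ ((N : ℝ) / ((N : ℝ) - 1)) / q) / h ^ (1 / ((N : ℝ) - 1))) := by
  obtain ⟨hN1, hp1, hp2, hpN, hpm1⟩ := basic_facts N hN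
  set p : ℝ := (N:ℝ)/((N:ℝ)-1) with hp
  have hq0 : (0:ℝ) < q := lt_of_lt_of_le one_pos hq
  have hh0 : (0:ℝ) < h := lt_trans one_pos hh
  set s : ℝ := h ^ p with hs
  have hs0 : 0 < s := Real.rpow_pos_of_pos hh0 p
  set n : ℕ := ⌈s⌉₊ with hn
  have hn0 : 0 < n := Nat.ceil_pos.2 hs0
  have hn0' : (0:ℝ) < (n:ℝ) := by exact_mod_cast hn0
  have hsn : s ≤ (n:ℝ) := Nat.le_ceil s
  have hns : (n:ℝ) ≤ s + 1 := (Nat.ceil_lt_add_one hs0.le).le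
  set c : ℝ := h / n with hc
  have hc0 : 0 < c := div_pos hh0 hn0'
  set a : ℕ → ℝ := fun k => if k < n then c else 0 with ha
  have hzero : ∀ k ∉ Finset.range n, a k = 0 := by
    intro k hk
    simp only [ha, Finset.mem_range, not_lt] at hk ⊢
    rw [if_neg (not_lt.2 hk)]
  have habs : ∀ k, |a k| = a k := by
    intro k
    simp only [ha]
    split <;> simp [hc0.le]
  -- ℓ¹ facts
  have hzero1 : ∀ k ∉ Finset.range n, |a k| = 0 := fun k hk => by rw [habs, hzero k hk]
  have hsum1 : Summable (fun k => |a k|) := summable_of_ne_finset_zero hzero1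
  have htsum1 : (∑' k, |a k|) = h := by
    rw [tsum_eq_sum hzero1]
    have : ∀ k ∈ Finset.range n, |a k| = c := by
      intro k hk; rw [habs]; simp only [ha]; rw [if_pos (Finset.mem_range.1 hk)]
    rw [Finset.sum_congr rfl this, Finset.sum_const, Finset.card_range, nsmul_eq_mul, hc,
      mul_div_cancel₀ _ (ne_of_gt hn0')]
  -- ℓᴺ facts
  have hzeroN : ∀ k ∉ Finset.range n, |a k| ^ N = 0 := by
    intro k hk; rw [hzero1 k hk]; exact zero_pow (by omega)
  have hsumN : Summable (fun k => |a k| ^ N) := summable_of_ne_finset_zero hzeroN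
  have hpowN : ((n:ℝ)) ^ (N - 1) ≥ h ^ (N:ℕ) := by
    have h1 : h ^ (N:ℕ) = s ^ (N - 1 : ℕ) := by
      rw [hs, ← Real.rpow_natCast (h ^ p) (N-1), ← Real.rpow_mul hh0.le]
      rw [← Real.rpow_natCast h N]
      congr 1
      have : ((N - 1 : ℕ) : ℝ) = (N:ℝ) - 1 := by
        have : (1:ℕ) ≤ N := by omega
        push_cast [this]; ring
      rw [this, hpN]
    rw [h1]
    exact pow_le_pow_left₀ hs0.le hsn _
  have htsumN : (∑' k, |a k| ^ N) ≤ 1 := by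
    rw [tsum_eq_sum hzeroN]
    have : ∀ k ∈ Finset.range n, |a k| ^ N = c ^ N := by
      intro k hk; rw [habs]; simp only [ha]; rw [if_pos (Finset.mem_range.1 hk)]
    rw [Finset.sum_congr rfl this, Finset.sum_const, Finset.card_range, nsmul_eq_mul]
    have hcN : c ^ N = h ^ (N:ℕ) / (n:ℝ) ^ (N:ℕ) := by rw [hc, div_pow]
    rw [hcN]
    have hnN : ((n:ℝ))^N = (n:ℝ)^(N-1) * n := by
      rw [← pow_succ]; congr 1; omega
    have heq : (n:ℝ) * (h ^ N / (n:ℝ) ^ N) = h ^ N / (n:ℝ) ^ (N-1) := by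
      rw [hnN]; field_simp
    rw [heq, div_le_one (by positivity)]
    exact hpowN
  -- the weighted value
  have hzeroE : ∀ k ∉ Finset.range n, ENNReal.ofReal (|a k| ^ q * Real.exp (k:ℝ)) = 0 := by
    intro k hk
    rw [hzero1 k hk, Real.zero_rpow (ne_of_gt hq0), zero_mul, ENNReal.ofReal_zero]
  have hub : muSeq N q h ≤
      (∑' k : ℕ, ENNReal.ofReal (|a k| ^ q * Real.exp (k : ℝ))) ^ (1 / q) :=
    iInf_le _ (⟨a, hsum1, htsum1, hsumN, htsumN⟩ :
      {a : ℕ → ℝ // Summable (fun k => |a k|) ∧ (∑' k : ℕ, |a k|) = h ∧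
        Summable (fun k => |a k| ^ N) ∧ (∑' k : ℕ, |a k| ^ N) ≤ 1})
  have hVsum : (∑' k : ℕ, ENNReal.ofReal (|a k| ^ q * Real.exp (k : ℝ)))
      = ENNReal.ofReal (∑ k ∈ Finset.range n, |a k| ^ q * Real.exp (k:ℝ)) := by
    rw [tsum_eq_sum hzeroE, ENNReal.ofReal_sum_of_nonneg]
    intro k _
    have : (0:ℝ) ≤ |a k| ^ q := Real.rpow_nonneg (abs_nonneg _) _
    positivity
  have hVle : (∑ k ∈ Finset.range n, |a k| ^ q * Real.exp (k:ℝ)) ≤ c ^ q * Real.exp n := by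
    have h1 : ∀ k ∈ Finset.range n, |a k| ^ q * Real.exp (k:ℝ) = c ^ q * Real.exp 1 ^ k := by
      intro k hk
      rw [habs]
      simp only [ha]
      rw [if_pos (Finset.mem_range.1 hk)]
      congr 1
      rw [← Real.exp_nat_mul, mul_one]
    rw [Finset.sum_congr rfl h1, ← Finset.mul_sum]
    have h2 : (∑ k ∈ Finset.range n, Real.exp 1 ^ k) ≤ Real.exp n := by
      rw [geom_sum_eq (by simpa using Real.exp_one_ne_one)]
      have he1 : (1:ℝ) ≤ Real.exp 1 - 1 := by
        have := Real.add_one_le_exp (1:ℝ); linarith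
      have hexpn : Real.exp 1 ^ n = Real.exp (n:ℝ) := by
        rw [← Real.exp_nat_mul, mul_one]
      have h1n : (1:ℝ) ≤ Real.exp 1 ^ n := one_le_pow₀ (by linarith)
      calc (Real.exp 1 ^ n - 1) / (Real.exp 1 - 1) ≤ Real.exp 1 ^ n - 1 :=
            div_le_self (by linarith) he1
        _ ≤ Real.exp (n:ℝ) := by rw [← hexpn]; linarith
    have hcq : (0:ℝ) ≤ c ^ q := Real.rpow_nonneg hc0.le _
    exact mul_le_mul_of_nonneg_left h2 hcq
  -- put things together
  have hend : ENNReal.ofReal (c ^ q * Real.exp n) ^ (1/q)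
      = ENNReal.ofReal (c * Real.exp ((n:ℝ)/q)) := by
    rw [ENNReal.ofReal_rpow_of_nonneg (by positivity) (by positivity)]
    congr 1
    rw [Real.mul_rpow (Real.rpow_nonneg hc0.le _) (Real.exp_pos _).le]
    have e1 : (c ^ q) ^ (1/q) = c := by
      rw [← Real.rpow_mul hc0.le, mul_one_div, div_self (ne_of_gt hq0), Real.rpow_one]
    have e2 : Real.exp (n:ℝ) ^ (1/q) = Real.exp ((n:ℝ)/q) := by
      rw [← Real.exp_mul, mul_one_div]
    rw [e1, e2]
  have hfin : c * Real.exp ((n:ℝ)/q) ≤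
      Real.exp 1 * Real.exp (h ^ p / q) / h ^ (1 / ((N : ℝ) - 1)) := by
    have hhr : (0:ℝ) < h ^ (1 / ((N : ℝ) - 1)) := Real.rpow_pos_of_pos hh0 _
    have hcle : c ≤ 1 / h ^ (1 / ((N : ℝ) - 1)) := by
      rw [hc, div_le_div_iff₀ hn0' hhr, one_mul]
      calc h * h ^ (1 / ((N:ℝ)-1)) = h ^ (1 + 1/((N:ℝ)-1)) := by
            rw [Real.rpow_add hh0, Real.rpow_one]
        _ = h ^ p := by
            congr 1
            rw [hp]; field_simp; ring
        _ ≤ (n:ℝ) := hsn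
    have hexp : Real.exp ((n:ℝ)/q) ≤ Real.exp 1 * Real.exp (h ^ p / q) := by
      rw [← Real.exp_add]
      apply Real.exp_le_exp.2
      have h3 : (n:ℝ)/q ≤ (h ^ p + 1)/q := by gcongr
      calc (n:ℝ)/q ≤ (h ^ p + 1)/q := h3
        _ = h ^ p/q + 1/q := by ring
        _ ≤ 1 + h ^ p / q := by
            have : 1/q ≤ 1 := by rw [div_le_one hq0]; exact hq
            linarith
    calc c * Real.exp ((n:ℝ)/q)
        ≤ (1 / h ^ (1 / ((N : ℝ) - 1))) * (Real.exp 1 * Real.exp (h ^ p / q)) :=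
          mul_le_mul hcle hexp (Real.exp_pos _).le (by positivity)
      _ = Real.exp 1 * Real.exp (h ^ p / q) / h ^ (1 / ((N : ℝ) - 1)) := by ring
  calc muSeq N q h ≤ (∑' k : ℕ, ENNReal.ofReal (|a k| ^ q * Real.exp (k : ℝ))) ^ (1 / q) := hub
    _ = ENNReal.ofReal (∑ k ∈ Finset.range n, |a k| ^ q * Real.exp (k:ℝ)) ^ (1/q) := by
        rw [hVsum]
    _ ≤ ENNReal.ofReal (c ^ q * Real.exp n) ^ (1/q) := by
        apply ENNReal.rpow_le_rpow (ENNReal.ofReal_le_ofReal hVle) (by positivity)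
    _ = ENNReal.ofReal (c * Real.exp ((n:ℝ)/q)) := hend
    _ ≤ _ := ENNReal.ofReal_le_ofReal hfin

lemma rpow_sub_rpow_le_aux {p x y : ℝ} (hp : 1 ≤ p) (hy : 0 < y) (hxy : y ≤ x) :
    x ^ p - y ^ p ≤ p * x ^ (p - 1) * (x - y) := by
  have hx : 0 < x := hy.trans_le hxy
  have key := Convex.norm_image_sub_le_of_norm_hasDerivWithin_le
    (f := fun z : ℝ => z ^ p) (f' := fun z : ℝ => p * z ^ (p - 1))
    (s := Set.Icc y x) (C := p * x ^ (p - 1))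
    (fun z hz => (Real.hasDerivAt_rpow_const
      (Or.inl (ne_of_gt (hy.trans_le hz.1)))).hasDerivWithinAt)
    (fun z hz => by
      have hz0 : 0 ≤ z := (hy.trans_le hz.1).le
      have h1 : z ^ (p - 1) ≤ x ^ (p - 1) :=
        Real.rpow_le_rpow hz0 hz.2 (by linarith)
      have hzp : 0 ≤ z ^ (p - 1) := Real.rpow_nonneg hz0 _
      show ‖p * z ^ (p - 1)‖ ≤ p * x ^ (p - 1)
      rw [Real.norm_eq_abs, abs_of_nonneg (mul_nonneg (by linarith) hzp)]
      exact mul_le_mul_of_nonneg_left h1 (by linarith))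
    (convex_Icc y x) ⟨le_refl y, hxy⟩ ⟨hxy, le_refl x⟩
  rw [Real.norm_eq_abs, Real.norm_eq_abs, abs_of_nonneg (sub_nonneg.2 hxy)] at key
  exact le_trans (le_abs_self _) key

set_option maxHeartbeats 1000000 in
lemma muSeq_lower (N : ℕ) (hN : 2 ≤ N) (q : ℝ) (hq : 1 ≤ q) (h : ℝ) (hh : 1 < h) :
    ENNReal.ofReal
        ((1 - Real.exp (-(1/q))) * Real.exp (-3) *
          Real.exp (h ^ ((N : ℝ) / ((N : ℝ) - 1)) / q) / h ^ (1 / ((N : ℝ) - 1)))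
      ≤ muSeq N q h := by
  obtain ⟨hN1, hp1, hp2, hpN, hpm1⟩ := basic_facts N hN
  set p : ℝ := (N:ℝ)/((N:ℝ)-1) with hp
  have hq0 : (0:ℝ) < q := lt_of_lt_of_le one_pos hq
  have hh0 : (0:ℝ) < h := lt_trans one_pos hh
  set θ : ℝ := Real.exp (-(1/q)) with hθ
  have hθ0 : 0 < θ := Real.exp_pos _
  have hθ1 : θ < 1 := by
    rw [hθ, Real.exp_lt_one_iff]
    have : 0 < 1/q := by positivity
    linarith
  set δ : ℝ := h ^ (-(1/((N:ℝ)-1))) with hδ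
  have hδ0 : 0 < δ := Real.rpow_pos_of_pos hh0 _
  have hδ1 : δ ≤ 1 := Real.rpow_le_one_of_one_le_of_nonpos hh.le
    (neg_nonpos.2 (by positivity))
  have hδh : δ < h := lt_of_le_of_lt hδ1 hh
  -- key exponent identity: h^(p-1) * δ = 1
  have hkey : h ^ (p - 1) * δ = 1 := by
    rw [hδ, ← Real.rpow_add hh0, hpm1,
      show 1/((N:ℝ)-1) + -(1/((N:ℝ)-1)) = 0 by ring, Real.rpow_zero]
  set t : ℝ := (1 - θ) * Real.exp (-3) * Real.exp (h ^ p / q) / h ^ (1 / ((N:ℝ)-1)) with ht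
  have hhr : (0:ℝ) < h ^ (1 / ((N : ℝ) - 1)) := Real.rpow_pos_of_pos hh0 _
  have ht0 : 0 < t := by
    apply div_pos _ hhr
    have : 0 < 1 - θ := by linarith
    positivity
  -- δ = 1 / h^(1/(N-1))
  have hδeq : δ = 1 / h ^ (1/((N:ℝ)-1)) := by
    rw [hδ, Real.rpow_neg hh0.le]
    exact (one_div _).symm
  -- s and n
  set s : ℝ := (h - δ) ^ p with hs
  have hhδ0 : 0 < h - δ := by linarith
  have hs0 : 0 < s := Real.rpow_pos_of_pos hhδ0 _
  set n : ℕ := ⌊s⌋₊ with hn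
  have hns : (n:ℝ) ≤ s := Nat.floor_le hs0.le
  have hsn : s - 1 < (n:ℝ) := Nat.sub_one_lt_floor s
  -- s ≥ h^p - 2
  have hs2 : h ^ p - 2 ≤ s := by
    have hmvt := rpow_sub_rpow_le_aux hp1 hhδ0 (by linarith : h - δ ≤ h)
    have : h - (h - δ) = δ := by ring
    rw [this] at hmvt
    have h2 : p * (h ^ (p-1) * δ) = p := by rw [hkey, mul_one]
    nlinarith [hmvt, hp2, hδ0]
  -- now take any admissible sequence
  refine le_iInf ?_
  rintro ⟨a, ha1, ha2, haN, haN1⟩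
  -- Step 1: partial sum bound
  have hS1 : (∑ k ∈ Finset.range n, |a k|) ≤ h - δ := by
    rcases Nat.eq_zero_or_pos n with hn0 | hn0
    · rw [hn0]; simp; linarith
    have hn0' : (0:ℝ) < (n:ℝ) := by exact_mod_cast hn0
    have hNsub : N - 1 + 1 = N := by omega
    have hJ := pow_sum_div_card_le_sum_pow
      (s := Finset.range n) (f := fun k => |a k|) (fun i _ => abs_nonneg _) (N - 1)
    rw [hNsub, Finset.card_range] at hJ
    have hle1 : (∑ k ∈ Finset.range n, |a k| ^ N) ≤ 1 := by
      refine le_trans (Summable.sum_le_tsum _ (fun k _ => by positivity) haN) haN1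
    have hJ2 : (∑ k ∈ Finset.range n, |a k|) ^ N ≤ (n:ℝ) ^ (N - 1) := by
      rw [div_le_iff₀ (by positivity)] at hJ
      calc (∑ k ∈ Finset.range n, |a k|) ^ N ≤ (∑ k ∈ Finset.range n, |a k| ^ N) * (n:ℝ)^(N-1) :=
            hJ
        _ ≤ 1 * (n:ℝ)^(N-1) := by
            apply mul_le_mul_of_nonneg_right hle1 (by positivity)
        _ = (n:ℝ)^(N-1) := one_mul _
    have hsN : ((n:ℝ)) ^ (N - 1) ≤ (h - δ) ^ (N : ℕ) := by
      have h1 : (h - δ) ^ (N:ℕ) = s ^ (N - 1 : ℕ) := by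
        rw [hs, ← Real.rpow_natCast ((h-δ) ^ p) (N-1), ← Real.rpow_mul hhδ0.le,
          ← Real.rpow_natCast (h-δ) N]
        congr 1
        have hcast : ((N - 1 : ℕ) : ℝ) = (N:ℝ) - 1 := by
          have : (1:ℕ) ≤ N := by omega
          push_cast [this]; ring
        rw [hcast, hpN]
      rw [h1]
      exact pow_le_pow_left₀ (by positivity) hns _
    have : (∑ k ∈ Finset.range n, |a k|) ^ N ≤ (h - δ) ^ N := le_trans hJ2 hsN
    exact (pow_le_pow_iff_left₀ (Finset.sum_nonneg fun i _ => abs_nonneg _)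
      hhδ0.le (by omega)).1 this
  -- Step 2: tail bound
  have htail : δ ≤ ∑' k, |a (k + n)| := by
    have := Summable.sum_add_tsum_nat_add (f := fun k => |a k|) n ha1
    have h2 : (∑' k, |a (k + n)|) = h - ∑ k ∈ Finset.range n, |a k| := by
      rw [← ha2] at *
      linarith [this]
    rw [h2]; linarith
  -- Step 3: find a large entry
  have hKex : ∃ K : ℕ, δ * (1 - θ) * θ ^ K ≤ |a (K + n)| := by
    by_contra hcon
    push_neg at hcon
    have hsumg : Summable (fun k : ℕ => δ * (1 - θ) * θ ^ k) :=
      (summable_geometric_of_lt_one hθ0.le hθ1).mul_left _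
    have hlt : (∑' k, |a (k + n)|) < ∑' k : ℕ, δ * (1 - θ) * θ ^ k := by
      apply Summable.tsum_lt_tsum_of_nonneg (fun b => abs_nonneg _) (fun b => (hcon b).le)
        (hcon 0) hsumg
    have hgeom : (∑' k : ℕ, δ * (1 - θ) * θ ^ k) = δ := by
      rw [tsum_mul_left, tsum_geometric_of_lt_one hθ0.le hθ1, mul_assoc,
        mul_inv_cancel₀ (by linarith : (1:ℝ) - θ ≠ 0), mul_one]
    rw [hgeom] at hlt
    linarith
  obtain ⟨K, hK⟩ := hKex
  -- Step 4: conclude t^q ≤ |a (K+n)|^q * exp (K+n)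
  have hmain : t ^ q ≤ |a (K + n)| ^ q * Real.exp ((K + n : ℕ) : ℝ) := by
    have hθ' : (0:ℝ) < 1 - θ := by linarith
    have hb0 : (0:ℝ) ≤ δ * (1 - θ) * θ ^ K :=
      mul_nonneg (mul_nonneg hδ0.le hθ'.le) (pow_nonneg hθ0.le _)
    have h1 : (δ * (1 - θ) * θ ^ K) ^ q ≤ |a (K + n)| ^ q :=
      Real.rpow_le_rpow hb0 hK hq0.le
    have hθK : θ ^ K = Real.exp (-(K/q)) := by
      rw [hθ, ← Real.exp_nat_mul]
      congr 1; ring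
    have h2 : (δ * (1 - θ) * θ ^ K) ^ q
        = δ ^ q * (1 - θ) ^ q * Real.exp (-(K:ℝ)) := by
      rw [Real.mul_rpow (mul_nonneg hδ0.le hθ'.le) (pow_nonneg hθ0.le _),
        Real.mul_rpow hδ0.le hθ'.le, hθK, ← Real.exp_mul]
      congr 2
      field_simp
    have h3 : Real.exp ((K + n : ℕ) : ℝ) = Real.exp (K:ℝ) * Real.exp (n:ℝ) := by
      rw [← Real.exp_add]; congr 1; push_cast; ring
    have hn3 : h ^ p - 3 ≤ (n:ℝ) := by linarith
    have h4 : Real.exp (-3) * Real.exp (h ^ p) ≤ Real.exp (n:ℝ) := by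
      rw [← Real.exp_add]
      exact Real.exp_le_exp.2 (by linarith)
    -- t^q computation
    have htq : t ^ q = (1 - θ) ^ q * Real.exp (-3*q) * Real.exp (h ^ p) * δ ^ q := by
      rw [ht, hδeq]
      rw [div_eq_mul_one_div ((1 - θ) * Real.exp (-3) * Real.exp (h ^ p / q)) (h ^ (1/((N:ℝ)-1)))]
      have e0 : (0:ℝ) < Real.exp (-3) := Real.exp_pos _
      have e1 : (0:ℝ) < Real.exp (h ^ p / q) := Real.exp_pos _
      have A0 : (0:ℝ) ≤ (1 - θ) * Real.exp (-3) := mul_nonneg hθ'.le e0.le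
      have A1 : (0:ℝ) ≤ (1 - θ) * Real.exp (-3) * Real.exp (h ^ p / q) :=
        mul_nonneg A0 e1.le
      rw [Real.mul_rpow A1 (by positivity),
        Real.mul_rpow A0 e1.le,
        Real.mul_rpow hθ'.le e0.le]
      rw [← Real.exp_mul, ← Real.exp_mul]
      rw [div_mul_cancel₀ _ (ne_of_gt hq0)]
    rw [htq]
    calc (1 - θ) ^ q * Real.exp (-3*q) * Real.exp (h ^ p) * δ ^ q
        ≤ (1 - θ) ^ q * Real.exp (-3) * Real.exp (h ^ p) * δ ^ q := by
          have : Real.exp (-3*q) ≤ Real.exp (-3) := Real.exp_le_exp.2 (by linarith)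
          have h10 : (0:ℝ) ≤ (1-θ) ^ q := Real.rpow_nonneg (by linarith) _
          have h20 : (0:ℝ) ≤ δ ^ q := Real.rpow_nonneg hδ0.le _
          have h30 : (0:ℝ) < Real.exp (h ^ p) := Real.exp_pos _
          exact mul_le_mul_of_nonneg_right (mul_le_mul_of_nonneg_right
            (mul_le_mul_of_nonneg_left this h10) h30.le) h20
      _ ≤ |a (K + n)| ^ q * Real.exp ((K + n : ℕ) : ℝ) := by
          rw [h3]
          calc (1 - θ) ^ q * Real.exp (-3) * Real.exp (h ^ p) * δ ^ q
              ≤ (1 - θ) ^ q * Real.exp (n:ℝ) * δ ^ q := by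
                have h10 : (0:ℝ) ≤ (1-θ) ^ q := Real.rpow_nonneg (by linarith) _
                have h20 : (0:ℝ) ≤ δ ^ q := Real.rpow_nonneg hδ0.le _
                nlinarith [mul_le_mul_of_nonneg_left h4 h10]
            _ = δ ^ q * (1 - θ) ^ q * Real.exp (-(K:ℝ)) * (Real.exp (K:ℝ) * Real.exp (n:ℝ)) := by
                have hEK : Real.exp (-(K:ℝ)) * Real.exp (K:ℝ) = 1 := by
                  rw [← Real.exp_add]; simp
                calc (1 - θ) ^ q * Real.exp (n:ℝ) * δ ^ q
                    = δ ^ q * (1 - θ) ^ q * (Real.exp (-(K:ℝ)) * Real.exp (K:ℝ))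
                        * Real.exp (n:ℝ) := by rw [hEK]; ring
                  _ = _ := by ring
            _ = (δ * (1 - θ) * θ ^ K) ^ q * (Real.exp (K:ℝ) * Real.exp (n:ℝ)) := by rw [h2]
            _ ≤ |a (K + n)| ^ q * (Real.exp (K:ℝ) * Real.exp (n:ℝ)) := by
                apply mul_le_mul_of_nonneg_right h1 (by positivity)
  -- Step 5: wrap up in ENNReal
  have hterm : ENNReal.ofReal (t ^ q) ≤
      ∑' k : ℕ, ENNReal.ofReal (|a k| ^ q * Real.exp (k : ℝ)) := by
    calc ENNReal.ofReal (t ^ q)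
        ≤ ENNReal.ofReal (|a (K + n)| ^ q * Real.exp ((K + n : ℕ) : ℝ)) :=
          ENNReal.ofReal_le_ofReal hmain
      _ ≤ _ := ENNReal.le_tsum (K + n)
  calc ENNReal.ofReal t = ENNReal.ofReal (t ^ q) ^ (1/q) := by
        rw [ENNReal.ofReal_rpow_of_nonneg (Real.rpow_nonneg ht0.le _) (by positivity),
          ← Real.rpow_mul ht0.le, mul_one_div, div_self (ne_of_gt hq0), Real.rpow_one]
    _ ≤ (∑' k : ℕ, ENNReal.ofReal (|a k| ^ q * Real.exp (k : ℝ))) ^ (1/q) :=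
        ENNReal.rpow_le_rpow hterm (by positivity)

end AuxStatement19

/-- Lemma 2.4: for `h > 1`, `μ(h) ≍ exp(h^{N/(N-1)}/q) / h^{1/(N-1)}`. -/
theorem statement19 (N : ℕ) (hN : 2 ≤ N) (q : ℝ) (hq : 1 ≤ q) :
    ∃ c C : ℝ, 0 < c ∧ 0 < C ∧ ∀ h : ℝ, 1 < h →
      ENNReal.ofReal
          (c * Real.exp (h ^ ((N : ℝ) / ((N : ℝ) - 1)) / q) / h ^ (1 / ((N : ℝ) - 1)))
        ≤ muSeq N q h ∧
      muSeq N q h ≤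
        ENNReal.ofReal
          (C * Real.exp (h ^ ((N : ℝ) / ((N : ℝ) - 1)) / q) / h ^ (1 / ((N : ℝ) - 1))) := by
  refine ⟨(1 - Real.exp (-(1/q))) * Real.exp (-3), Real.exp 1, ?_, Real.exp_pos 1, ?_⟩
  · have h1 : Real.exp (-(1/q)) < 1 := by
      rw [Real.exp_lt_one_iff]
      have hq0 : (0:ℝ) < q := lt_of_lt_of_le one_pos hq
      have : (0:ℝ) < 1/q := by positivity
      linarith
    exact mul_pos (by linarith) (Real.exp_pos _)
  · intro h hh
    exact ⟨muSeq_lower N hN q hq h hh, muSeq_upper N hN q hq h hh⟩
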